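/- Define F : ℂ × ℂ × ℂˣ → Matrix (Fin 3) (Fin 3) ℂ by F(x,y,z) := U(x, y, π*Complex.I*Complex.log z + x*y/2). Then for all (x,y,z), (x',y',z') ∈ ℂ × ℂ × ℂˣ the following are equivalent: (i) there exist integers l, m with x' = x + 2*π*Complex.I*l, y' = y + 2*π*Complex.I*m, and (z' : ℂ) = z * Complex.exp (l*y − m*x); (ii) there exist integers l, m, k with F(x',y',z') = U(2*π*Complex.I*l, 2*π*Complex.I*m, (2*π*Complex.I)^2 * k / 2) * F(x,y,z). (This identifies the quotient of ℂ²×ℂˣ by the Heisenberg-type ⟨ν,μ⟩-action with the quotient H̃_ℤ∖H_ℂ.) -/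

import Mathlib

/-- The 3×3 upper unipotent complex matrix `U(a,b,c) = !![1,a,c; 0,1,b; 0,0,1]`. -/
def U (a b c : ℂ) : Matrix (Fin 3) (Fin 3) ℂ := !![1, a, c; 0, 1, b; 0, 0, 1]

/-- The map `F : ℂ × ℂ × ℂˣ → H_ℂ`, `F(x,y,z) = U(x, y, πi·log z + xy/2)`. -/
noncomputable def Fmap (x y : ℂ) (z : ℂˣ) : Matrix (Fin 3) (Fin 3) ℂ :=
  U x y ((Real.pi : ℂ) * Complex.I * Complex.log (z : ℂ) + x * y / 2)

/-- The identification of the quotient of `ℂ² × ℂˣ` by the Heisenberg-type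
`⟨ν,μ⟩`-action with the quotient `H̃_ℤ∖H_ℂ`. -/
lemma U_mul (a b c a' b' c' : ℂ) :
    U a b c * U a' b' c' = U (a + a') (b + b') (c + c' + a * b') := by
  simp only [U, Matrix.mul_fin_three]
  norm_num
  ring_nf
  simp

lemma U_inj {a b c a' b' c' : ℂ} (h : U a b c = U a' b' c') :
    a = a' ∧ b = b' ∧ c = c' := by
  refine ⟨?_, ?_, ?_⟩
  · have := congrFun (congrFun h 0) 1; simpa [U] using this
  · have := congrFun (congrFun h 1) 2; simpa [U] using this
  · have := congrFun (congrFun h 0) 2; simpa [U] using this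

lemma piI_ne : (Real.pi : ℂ) * Complex.I ≠ 0 :=
  mul_ne_zero (by exact_mod_cast Real.pi_ne_zero) Complex.I_ne_zero

theorem heisenberg_quotient_identification (x y : ℂ) (z : ℂˣ) (x' y' : ℂ) (z' : ℂˣ) :
    (∃ l m : ℤ,
        x' = x + 2 * (Real.pi : ℂ) * Complex.I * l ∧
        y' = y + 2 * (Real.pi : ℂ) * Complex.I * m ∧
        (z' : ℂ) = (z : ℂ) * Complex.exp ((l : ℂ) * y - (m : ℂ) * x)) ↔
    (∃ l m k : ℤ,
        Fmap x' y' z' =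
          U (2 * (Real.pi : ℂ) * Complex.I * l) (2 * (Real.pi : ℂ) * Complex.I * m)
            ((2 * (Real.pi : ℂ) * Complex.I) ^ 2 * k / 2) * Fmap x y z) := by
  constructor
  · rintro ⟨l, m, hx, hy, hz⟩
    -- log z' = log z + (l*y - m*x) + n * (2πi) for some n
    have hzne : (z : ℂ) ≠ 0 := z.ne_zero
    have hexp : Complex.exp (Complex.log (z' : ℂ)) =
        Complex.exp (Complex.log (z : ℂ) + ((l : ℂ) * y - (m : ℂ) * x)) := by
      rw [Complex.exp_log z'.ne_zero, Complex.exp_add, Complex.exp_log hzne, hz]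
    obtain ⟨n, hn⟩ := Complex.exp_eq_exp_iff_exists_int.mp hexp
    refine ⟨l, m, n + l * m, ?_⟩
    rw [Fmap, Fmap, U_mul]
    rw [hx, hy, hn]
    congr 1 <;> push_cast <;> ring
  · rintro ⟨l, m, k, h⟩
    rw [Fmap, Fmap, U_mul] at h
    obtain ⟨hx, hy, hc⟩ := U_inj h
    refine ⟨l, m, by rw [hx]; ring, by rw [hy]; ring, ?_⟩
    have hlog : Complex.log (z' : ℂ) =
        Complex.log (z : ℂ) + ((l : ℂ) * y - (m : ℂ) * x) + ((k : ℂ) - l * m) * (2 * Real.pi * Complex.I) := by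
      apply mul_left_cancel₀ piI_ne
      have hI2 : (Complex.I : ℂ) ^ 2 = -1 := Complex.I_sq
      have hI4 : (Complex.I : ℂ) ^ 4 = 1 := by rw [show (4:ℕ)=2*2 from rfl, pow_mul, hI2]; norm_num
      rw [hx, hy] at hc
      linear_combination hc
    have : (z' : ℂ) = Complex.exp (Complex.log (z' : ℂ)) := (Complex.exp_log z'.ne_zero).symm
    rw [this, hlog, Complex.exp_add, Complex.exp_add, Complex.exp_log z.ne_zero]
    have h1 : Complex.exp (((k : ℂ) - l * m) * (2 * Real.pi * Complex.I)) = 1 := by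
      rw [show ((k:ℂ) - l * m) * (2 * Real.pi * Complex.I) = ((k - l * m : ℤ) : ℂ) * (2 * Real.pi * Complex.I) by push_cast; ring]
      exact Complex.exp_int_mul_two_pi_mul_I _
    rw [h1, mul_one]
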